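/- Let F be a real-valued function on axis-parallel rectangles in ℝ² which is additive under single cuts: whenever a rectangle R is split by a horizontal or vertical line into two non-overlapping rectangles R₁, R₂ with R = R₁ ∪ R₂, one has F(R) = F(R₁) + F(R₂). Then F is unambiguously defined on figures: for any two finite families (R₁,…,R_m) and (R'₁,…,R'_n) of pairwise non-overlapping axis-parallel rectangles with the same union, Σᵢ F(Rᵢ) = Σⱼ F(R'ⱼ). -/
import Mathlib


/-- The axis-parallel rectangle `[a,b] × [c,d]` in `ℝ²`. -/
def Rect (a b c d : ℝ) : Set (ℝ × ℝ) := Set.Icc a b ×ˢ Set.Icc c d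

/-- A set is an axis-parallel rectangle. -/
def IsRect (R : Set (ℝ × ℝ)) : Prop :=
  ∃ a b c d : ℝ, a ≤ b ∧ c ≤ d ∧ R = Rect a b c d



variable {F : Set (ℝ × ℝ) → ℝ}

lemma F_degV (hcutV : ∀ a b c d m : ℝ, a ≤ m → m ≤ b → c ≤ d →
      F (Rect a b c d) = F (Rect a m c d) + F (Rect m b c d))
    (a c d : ℝ) (hcd : c ≤ d) : F (Rect a a c d) = 0 := by
  have := hcutV a a c d a le_rfl le_rfl hcd; linarith

lemma F_degH (hcutH : ∀ a b c d m : ℝ, a ≤ b → c ≤ m → m ≤ d →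
      F (Rect a b c d) = F (Rect a b c m) + F (Rect a b m d))
    (a b c : ℝ) (hab : a ≤ b) : F (Rect a b c c) = 0 := by
  have := hcutH a b c c c hab le_rfl le_rfl; linarith

lemma chain_le (x : ℕ → ℝ) (s t : ℕ) (hst : s ≤ t)
    (h : ∀ k, s ≤ k → k < t → x k ≤ x (k+1)) : x s ≤ x t := by
  induction t, hst using Nat.le_induction with
  | base => exact le_rfl
  | succ t hst ih =>
    exact le_trans (ih (fun k hk hk' => h k hk (Nat.lt_succ_of_lt hk')))
      (h t hst (Nat.lt_succ_self t))

lemma dissectV (hcutV : ∀ a b c d m : ℝ, a ≤ m → m ≤ b → c ≤ d →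
      F (Rect a b c d) = F (Rect a m c d) + F (Rect m b c d))
    (c d : ℝ) (hcd : c ≤ d) (x : ℕ → ℝ) (s t : ℕ) (hst : s ≤ t)
    (h : ∀ k, s ≤ k → k < t → x k ≤ x (k+1)) :
    F (Rect (x s) (x t) c d) = ∑ k ∈ Finset.Ico s t, F (Rect (x k) (x (k+1)) c d) := by
  induction t, hst using Nat.le_induction with
  | base => simp [F_degV hcutV _ c d hcd]
  | succ t hst ih =>
    have h1 : ∀ k, s ≤ k → k < t → x k ≤ x (k+1) :=
      fun k hk hk' => h k hk (Nat.lt_succ_of_lt hk')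
    rw [Finset.sum_Ico_succ_top hst, ← ih h1,
      ← hcutV (x s) (x (t+1)) c d (x t) (chain_le x s t hst h1)
        (h t hst (Nat.lt_succ_self t)) hcd]

lemma dissectH (hcutH : ∀ a b c d m : ℝ, a ≤ b → c ≤ m → m ≤ d →
      F (Rect a b c d) = F (Rect a b c m) + F (Rect a b m d))
    (a b : ℝ) (hab : a ≤ b) (y : ℕ → ℝ) (u v : ℕ) (huv : u ≤ v)
    (h : ∀ l, u ≤ l → l < v → y l ≤ y (l+1)) :
    F (Rect a b (y u) (y v)) = ∑ l ∈ Finset.Ico u v, F (Rect a b (y l) (y (l+1))) := by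
  induction v, huv using Nat.le_induction with
  | base => simp [F_degH hcutH a b _ hab]
  | succ v huv ih =>
    have h1 : ∀ l, u ≤ l → l < v → y l ≤ y (l+1) :=
      fun l hl hl' => h l hl (Nat.lt_succ_of_lt hl')
    rw [Finset.sum_Ico_succ_top huv, ← ih h1,
      ← hcutH a b (y u) (y (v+1)) (y v) hab (chain_le y u v huv h1)
        (h v huv (Nat.lt_succ_self v))]

lemma dissect2 (hcutV : ∀ a b c d m : ℝ, a ≤ m → m ≤ b → c ≤ d →
      F (Rect a b c d) = F (Rect a m c d) + F (Rect m b c d))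
    (hcutH : ∀ a b c d m : ℝ, a ≤ b → c ≤ m → m ≤ d →
      F (Rect a b c d) = F (Rect a b c m) + F (Rect a b m d))
    (x y : ℕ → ℝ) (s t u v : ℕ) (hst : s ≤ t) (huv : u ≤ v)
    (hx : ∀ k, s ≤ k → k < t → x k ≤ x (k+1))
    (hy : ∀ l, u ≤ l → l < v → y l ≤ y (l+1)) :
    F (Rect (x s) (x t) (y u) (y v)) =
      ∑ k ∈ Finset.Ico s t, ∑ l ∈ Finset.Ico u v, F (Rect (x k) (x (k+1)) (y l) (y (l+1))) := by
  rw [dissectV hcutV (y u) (y v) (chain_le y u v huv hy) x s t hst hx]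
  exact Finset.sum_congr rfl fun k hk => by
    rw [Finset.mem_Ico] at hk
    exact dissectH hcutH (x k) (x (k+1)) (hx k hk.1 hk.2) y u v huv hy

attribute [local instance] Classical.propDecidable
lemma sum_eq_cellsum
    (hcutV : ∀ a b c d m : ℝ, a ≤ m → m ≤ b → c ≤ d →
      F (Rect a b c d) = F (Rect a m c d) + F (Rect m b c d))
    (hcutH : ∀ a b c d m : ℝ, a ≤ b → c ≤ m → m ≤ d →
      F (Rect a b c d) = F (Rect a b c m) + F (Rect a b m d))
    (x y : ℕ → ℝ) (P Q : ℕ)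
    (hx : StrictMonoOn x (Set.Iic P)) (hy : StrictMonoOn y (Set.Iic Q))
    (m : ℕ) (R : ℕ → Set (ℝ × ℝ)) (s t u v : ℕ → ℕ)
    (hrep : ∀ i < m, R i = Rect (x (s i)) (x (t i)) (y (u i)) (y (v i)) ∧
      s i ≤ t i ∧ t i ≤ P ∧ u i ≤ v i ∧ v i ≤ Q)
    (hdisj : ∀ i < m, ∀ j < m, i ≠ j → interior (R i) ∩ interior (R j) = ∅) :
    ∑ i ∈ Finset.range m, F (R i) =
      ∑ k ∈ Finset.range P, ∑ l ∈ Finset.range Q,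
        (if Rect (x k) (x (k+1)) (y l) (y (l+1)) ⊆ ⋃ i ∈ Finset.range m, R i
         then F (Rect (x k) (x (k+1)) (y l) (y (l+1))) else 0) := by
  -- basic index facts
  have hxlt : ∀ k < P, x k < x (k+1) := fun k hk =>
    hx (Set.mem_Iic.mpr hk.le) (Set.mem_Iic.mpr hk) (Nat.lt_succ_self k)
  have hylt : ∀ l < Q, y l < y (l+1) := fun l hl =>
    hy (Set.mem_Iic.mpr hl.le) (Set.mem_Iic.mpr hl) (Nat.lt_succ_self l)
  -- key characterization of cell containment
  have key : ∀ i < m, ∀ k < P, ∀ l < Q,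
      (Rect (x k) (x (k+1)) (y l) (y (l+1)) ⊆ R i ↔
        (k ∈ Finset.Ico (s i) (t i) ∧ l ∈ Finset.Ico (u i) (v i))) := by
    intro i hi k hk l hl
    obtain ⟨hRi, hst, htP, huv, hvQ⟩ := hrep i hi
    have mk : (k:ℕ) ∈ Set.Iic P := Set.mem_Iic.mpr hk.le
    have mk1 : (k+1) ∈ Set.Iic P := Set.mem_Iic.mpr hk
    have ml : (l:ℕ) ∈ Set.Iic Q := Set.mem_Iic.mpr hl.le
    have ml1 : (l+1) ∈ Set.Iic Q := Set.mem_Iic.mpr hl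
    have ms : s i ∈ Set.Iic P := Set.mem_Iic.mpr (hst.trans htP)
    have mt : t i ∈ Set.Iic P := Set.mem_Iic.mpr htP
    have mu : u i ∈ Set.Iic Q := Set.mem_Iic.mpr (huv.trans hvQ)
    have mv : v i ∈ Set.Iic Q := Set.mem_Iic.mpr hvQ
    rw [hRi]
    unfold Rect
    constructor
    · intro hsub
      rcases Set.prod_subset_prod_iff.mp hsub with ⟨h1, h2⟩ | h | h
      · have hne1 : (x k) ≤ (x (k+1)) := (hxlt k hk).le
        have hne2 : (y l) ≤ (y (l+1)) := (hylt l hl).le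
        rw [Set.Icc_subset_Icc_iff hne1] at h1
        rw [Set.Icc_subset_Icc_iff hne2] at h2
        refine ⟨Finset.mem_Ico.mpr ⟨?_, ?_⟩, Finset.mem_Ico.mpr ⟨?_, ?_⟩⟩
        · exact (hx.le_iff_le ms mk).mp h1.1
        · exact Nat.lt_of_succ_le ((hx.le_iff_le mk1 mt).mp h1.2)
        · exact (hy.le_iff_le mu ml).mp h2.1
        · exact Nat.lt_of_succ_le ((hy.le_iff_le ml1 mv).mp h2.2)
      · exact absurd h (Set.Nonempty.ne_empty (Set.nonempty_Icc.mpr (hxlt k hk).le))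
      · exact absurd h (Set.Nonempty.ne_empty (Set.nonempty_Icc.mpr (hylt l hl).le))
    · rintro ⟨hk', hl'⟩
      rw [Finset.mem_Ico] at hk' hl'
      refine Set.prod_mono (Set.Icc_subset_Icc ?_ ?_) (Set.Icc_subset_Icc ?_ ?_)
      · exact (hx.le_iff_le ms mk).mpr hk'.1
      · exact (hx.le_iff_le mk1 mt).mpr (Nat.succ_le_of_lt hk'.2)
      · exact (hy.le_iff_le mu ml).mpr hl'.1
      · exact (hy.le_iff_le ml1 mv).mpr (Nat.succ_le_of_lt hl'.2)
  -- each rectangle dissects into cells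
  have step1 : ∀ i ∈ Finset.range m, F (R i) =
      ∑ k ∈ Finset.range P, ∑ l ∈ Finset.range Q,
        (if Rect (x k) (x (k+1)) (y l) (y (l+1)) ⊆ R i
         then F (Rect (x k) (x (k+1)) (y l) (y (l+1))) else 0) := by
    intro i hi
    rw [Finset.mem_range] at hi
    obtain ⟨hRi, hst, htP, huv, hvQ⟩ := hrep i hi
    have hxc : ∀ k, s i ≤ k → k < t i → x k ≤ x (k+1) :=
      fun k _ hk2 => (hxlt k (lt_of_lt_of_le hk2 htP)).le
    have hyc : ∀ l, u i ≤ l → l < v i → y l ≤ y (l+1) :=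
      fun l _ hl2 => (hylt l (lt_of_lt_of_le hl2 hvQ)).le
    conv_lhs => rw [hRi, dissect2 hcutV hcutH x y (s i) (t i) (u i) (v i) hst huv hxc hyc]
    have e1 : ∀ k ∈ Finset.range P,
        (∑ l ∈ Finset.range Q,
          (if Rect (x k) (x (k+1)) (y l) (y (l+1)) ⊆ R i
           then F (Rect (x k) (x (k+1)) (y l) (y (l+1))) else 0)) =
        (if k ∈ Finset.Ico (s i) (t i) then
          ∑ l ∈ Finset.Ico (u i) (v i), F (Rect (x k) (x (k+1)) (y l) (y (l+1))) else 0) := by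
      intro k hk
      rw [Finset.mem_range] at hk
      have e2 : ∀ l ∈ Finset.range Q,
          (if Rect (x k) (x (k+1)) (y l) (y (l+1)) ⊆ R i
           then F (Rect (x k) (x (k+1)) (y l) (y (l+1))) else 0) =
          (if (k ∈ Finset.Ico (s i) (t i) ∧ l ∈ Finset.Ico (u i) (v i))
           then F (Rect (x k) (x (k+1)) (y l) (y (l+1))) else 0) := by
        intro l hl
        rw [Finset.mem_range] at hl
        rw [if_congr (key i hi k hk l hl) rfl rfl]
      rw [Finset.sum_congr rfl e2]
      by_cases hA : k ∈ Finset.Ico (s i) (t i)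
      · simp only [hA, true_and, if_true]
        have hsubQ : Finset.range Q ∩ Finset.Ico (u i) (v i) = Finset.Ico (u i) (v i) :=
          Finset.inter_eq_right.mpr (fun l hl => Finset.mem_range.mpr
            (lt_of_lt_of_le (Finset.mem_Ico.mp hl).2 hvQ))
        rw [Finset.sum_ite_mem, hsubQ]
      · simp [hA]
    have hsubP : Finset.range P ∩ Finset.Ico (s i) (t i) = Finset.Ico (s i) (t i) :=
      Finset.inter_eq_right.mpr (fun k hk => Finset.mem_range.mpr
        (lt_of_lt_of_le (Finset.mem_Ico.mp hk).2 htP))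
    rw [Finset.sum_congr rfl e1, Finset.sum_ite_mem, hsubP]
  rw [Finset.sum_congr rfl step1, Finset.sum_comm]
  refine Finset.sum_congr rfl fun k hk => ?_
  rw [Finset.sum_comm]
  refine Finset.sum_congr rfl fun l hl => ?_
  rw [Finset.mem_range] at hk hl
  -- now: ∑ i ∈ range m, ite (cell ⊆ R i) = ite (cell ⊆ U)
  set C := Rect (x k) (x (k+1)) (y l) (y (l+1)) with hC
  by_cases hU : C ⊆ ⋃ i ∈ Finset.range m, R i
  · -- find the unique i containing the cell
    have hw : ((x k + x (k+1))/2, (y l + y (l+1))/2) ∈ C := by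
      rw [hC]
      constructor
      · constructor <;> simp <;> linarith [hxlt k hk]
      · constructor <;> simp <;> linarith [hylt l hl]
    have hwint : ((x k + x (k+1))/2, (y l + y (l+1))/2) ∈ interior C := by
      rw [hC]
      unfold Rect
      rw [interior_prod_eq, interior_Icc, interior_Icc]
      constructor
      · constructor <;> simp <;> linarith [hxlt k hk]
      · constructor <;> simp <;> linarith [hylt l hl]
    obtain ⟨i, hi, hwi⟩ : ∃ i, i ∈ Finset.range m ∧
        ((x k + x (k+1))/2, (y l + y (l+1))/2) ∈ R i := by
      have := hU hw
      simpa [Set.mem_iUnion] using this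
    rw [Finset.mem_range] at hi
    have hsub : C ⊆ R i := by
      obtain ⟨hRi, hst, htP, huv, hvQ⟩ := hrep i hi
      rw [hRi] at hwi
      obtain ⟨⟨hw1, hw2⟩, ⟨hw3, hw4⟩⟩ := hwi
      have mk : (k:ℕ) ∈ Set.Iic P := Set.mem_Iic.mpr hk.le
      have mk1 : (k+1) ∈ Set.Iic P := Set.mem_Iic.mpr hk
      have ml : (l:ℕ) ∈ Set.Iic Q := Set.mem_Iic.mpr hl.le
      have ml1 : (l+1) ∈ Set.Iic Q := Set.mem_Iic.mpr hl
      have ms : s i ∈ Set.Iic P := Set.mem_Iic.mpr (hst.trans htP)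
      have mt : t i ∈ Set.Iic P := Set.mem_Iic.mpr htP
      have mu : u i ∈ Set.Iic Q := Set.mem_Iic.mpr (huv.trans hvQ)
      have mv : v i ∈ Set.Iic Q := Set.mem_Iic.mpr hvQ
      rw [key i hi k hk l hl]
      refine ⟨Finset.mem_Ico.mpr ⟨?_, ?_⟩, Finset.mem_Ico.mpr ⟨?_, ?_⟩⟩
      · have : x (s i) < x (k+1) := lt_of_le_of_lt hw1 (by linarith [hxlt k hk])
        exact Nat.lt_succ_iff.mp ((hx.lt_iff_lt ms mk1).mp this)
      · have : x k < x (t i) := lt_of_lt_of_le (by linarith [hxlt k hk]) hw2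
        exact (hx.lt_iff_lt mk mt).mp this
      · have : y (u i) < y (l+1) := lt_of_le_of_lt hw3 (by linarith [hylt l hl])
        exact Nat.lt_succ_iff.mp ((hy.lt_iff_lt mu ml1).mp this)
      · have : y l < y (v i) := lt_of_lt_of_le (by linarith [hylt l hl]) hw4
        exact (hy.lt_iff_lt ml mv).mp this
    rw [if_pos hU]
    rw [Finset.sum_eq_single_of_mem i (Finset.mem_range.mpr hi)]
    · rw [if_pos hsub]
    · intro j hj hji
      rw [Finset.mem_range] at hj
      rw [if_neg]
      intro hsubj
      have hemp := hdisj j hj i hi hji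
      have h1 : ((x k + x (k+1))/2, (y l + y (l+1))/2) ∈ interior (R j) :=
        interior_mono hsubj hwint
      have h2 : ((x k + x (k+1))/2, (y l + y (l+1))/2) ∈ interior (R i) :=
        interior_mono hsub hwint
      have : ((x k + x (k+1))/2, (y l + y (l+1))/2) ∈
          interior (R j) ∩ interior (R i) := ⟨h1, h2⟩
      rw [hemp] at this
      exact Set.notMem_empty _ this
  · rw [if_neg hU, Finset.sum_eq_zero]
    intro i hi
    rw [if_neg]
    intro hsubi
    exact hU (hsubi.trans (Set.subset_biUnion_of_mem hi))

/-- If `F` is a real-valued function on axis-parallel rectangles which is additive under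
single vertical and horizontal cuts, then `F` is unambiguously defined on figures: any two
finite families of pairwise non-overlapping axis-parallel rectangles with the same union
have the same total `F`-value. -/
theorem unambiguous_on_figures (F : Set (ℝ × ℝ) → ℝ)
    (hcutV : ∀ a b c d m : ℝ, a ≤ m → m ≤ b → c ≤ d →
      F (Rect a b c d) = F (Rect a m c d) + F (Rect m b c d))
    (hcutH : ∀ a b c d m : ℝ, a ≤ b → c ≤ m → m ≤ d →
      F (Rect a b c d) = F (Rect a b c m) + F (Rect a b m d))
    (m n : ℕ) (R R' : ℕ → Set (ℝ × ℝ))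
    (hR : ∀ i < m, IsRect (R i))
    (hR' : ∀ j < n, IsRect (R' j))
    (hdisj : ∀ i < m, ∀ j < m, i ≠ j → interior (R i) ∩ interior (R j) = ∅)
    (hdisj' : ∀ i < n, ∀ j < n, i ≠ j → interior (R' i) ∩ interior (R' j) = ∅)
    (hunion : ⋃ i ∈ Finset.range m, R i = ⋃ j ∈ Finset.range n, R' j) :
    ∑ i ∈ Finset.range m, F (R i) = ∑ j ∈ Finset.range n, F (R' j) := by

  classical
  by_cases hmn : m = 0 ∧ n = 0
  · simp [hmn.1, hmn.2]
  -- skolemize both families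
  have hR2 : ∀ i, ∃ p q r w : ℝ, i < m → (p ≤ q ∧ r ≤ w ∧ R i = Rect p q r w) := by
    intro i
    by_cases h : i < m
    · obtain ⟨p, q, r, w, h1, h2, h3⟩ := hR i h
      exact ⟨p, q, r, w, fun _ => ⟨h1, h2, h3⟩⟩
    · exact ⟨0, 0, 0, 0, fun h' => absurd h' h⟩
  choose a b c d hab using hR2
  have hR2' : ∀ j, ∃ p q r w : ℝ, j < n → (p ≤ q ∧ r ≤ w ∧ R' j = Rect p q r w) := by
    intro j
    by_cases h : j < n
    · obtain ⟨p, q, r, w, h1, h2, h3⟩ := hR' j h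
      exact ⟨p, q, r, w, fun _ => ⟨h1, h2, h3⟩⟩
    · exact ⟨0, 0, 0, 0, fun h' => absurd h' h⟩
  choose a' b' c' d' hab' using hR2'
  -- the grids
  set X : Finset ℝ := ((Finset.range m).image a ∪ (Finset.range m).image b) ∪
      ((Finset.range n).image a' ∪ (Finset.range n).image b') with hXdef
  set Y : Finset ℝ := ((Finset.range m).image c ∪ (Finset.range m).image d) ∪
      ((Finset.range n).image c' ∪ (Finset.range n).image d') with hYdef
  have hXne : X.Nonempty := by
    rcases not_and_or.mp hmn with hm | hn
    · exact ⟨a 0, Finset.mem_union_left _ (Finset.mem_union_left _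
        (Finset.mem_image_of_mem a (Finset.mem_range.mpr (Nat.pos_of_ne_zero hm))))⟩
    · exact ⟨a' 0, Finset.mem_union_right _ (Finset.mem_union_left _
        (Finset.mem_image_of_mem a' (Finset.mem_range.mpr (Nat.pos_of_ne_zero hn))))⟩
  have hYne : Y.Nonempty := by
    rcases not_and_or.mp hmn with hm | hn
    · exact ⟨c 0, Finset.mem_union_left _ (Finset.mem_union_left _
        (Finset.mem_image_of_mem c (Finset.mem_range.mpr (Nat.pos_of_ne_zero hm))))⟩
    · exact ⟨c' 0, Finset.mem_union_right _ (Finset.mem_union_left _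
        (Finset.mem_image_of_mem c' (Finset.mem_range.mpr (Nat.pos_of_ne_zero hn))))⟩
  set P : ℕ := X.card - 1 with hPdef
  set Q : ℕ := Y.card - 1 with hQdef
  have hPlt : P < X.card := Nat.sub_lt (Finset.card_pos.mpr hXne) one_pos
  have hQlt : Q < Y.card := Nat.sub_lt (Finset.card_pos.mpr hYne) one_pos
  set x : ℕ → ℝ := fun k => X.orderEmbOfFin rfl ⟨min k P, (min_le_right k P).trans_lt hPlt⟩
    with hxdef
  set y : ℕ → ℝ := fun l => Y.orderEmbOfFin rfl ⟨min l Q, (min_le_right l Q).trans_lt hQlt⟩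
    with hydef
  have hxmono : StrictMonoOn x (Set.Iic P) := by
    intro k hk l hl hkl
    rw [Set.mem_Iic] at hk hl
    have : (⟨min k P, (min_le_right k P).trans_lt hPlt⟩ : Fin X.card) <
        ⟨min l P, (min_le_right l P).trans_lt hPlt⟩ := by
      rw [Fin.mk_lt_mk, min_eq_left hk, min_eq_left hl]; exact hkl
    exact (X.orderEmbOfFin rfl).strictMono this
  have hymono : StrictMonoOn y (Set.Iic Q) := by
    intro k hk l hl hkl
    rw [Set.mem_Iic] at hk hl
    have : (⟨min k Q, (min_le_right k Q).trans_lt hQlt⟩ : Fin Y.card) <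
        ⟨min l Q, (min_le_right l Q).trans_lt hQlt⟩ := by
      rw [Fin.mk_lt_mk, min_eq_left hk, min_eq_left hl]; exact hkl
    exact (Y.orderEmbOfFin rfl).strictMono this
  have hxmem : ∀ e ∈ X, ∃ k, k ≤ P ∧ x k = e := by
    intro e he
    have : e ∈ Set.range (X.orderEmbOfFin rfl) := by
      rw [Finset.range_orderEmbOfFin]; exact he
    obtain ⟨j, hj⟩ := this
    refine ⟨j.1, Nat.le_sub_one_of_lt j.2, ?_⟩
    have hfin : (⟨min (j:ℕ) P, (min_le_right _ _).trans_lt hPlt⟩ : Fin X.card) = j :=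
      Fin.ext (min_eq_left (Nat.le_sub_one_of_lt j.2))
    show X.orderEmbOfFin rfl ⟨min (j:ℕ) P, (min_le_right _ _).trans_lt hPlt⟩ = e
    rw [hfin, hj]
  have hymem : ∀ e ∈ Y, ∃ l, l ≤ Q ∧ y l = e := by
    intro e he
    have : e ∈ Set.range (Y.orderEmbOfFin rfl) := by
      rw [Finset.range_orderEmbOfFin]; exact he
    obtain ⟨j, hj⟩ := this
    refine ⟨j.1, Nat.le_sub_one_of_lt j.2, ?_⟩
    have hfin : (⟨min (j:ℕ) Q, (min_le_right _ _).trans_lt hQlt⟩ : Fin Y.card) = j :=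
      Fin.ext (min_eq_left (Nat.le_sub_one_of_lt j.2))
    show Y.orderEmbOfFin rfl ⟨min (j:ℕ) Q, (min_le_right _ _).trans_lt hQlt⟩ = e
    rw [hfin, hj]
  -- indices for the first family
  have hrepR : ∀ i, ∃ s t u v : ℕ, i < m →
      (R i = Rect (x s) (x t) (y u) (y v) ∧ s ≤ t ∧ t ≤ P ∧ u ≤ v ∧ v ≤ Q) := by
    intro i
    by_cases h : i < m
    · obtain ⟨h1, h2, h3⟩ := hab i h
      have hmi := Finset.mem_range.mpr h
      obtain ⟨s, hsP, hs⟩ := hxmem (a i) (Finset.mem_union_left _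
        (Finset.mem_union_left _ (Finset.mem_image_of_mem a hmi)))
      obtain ⟨t, htP, ht⟩ := hxmem (b i) (Finset.mem_union_left _
        (Finset.mem_union_right _ (Finset.mem_image_of_mem b hmi)))
      obtain ⟨u, huQ, hu⟩ := hymem (c i) (Finset.mem_union_left _
        (Finset.mem_union_left _ (Finset.mem_image_of_mem c hmi)))
      obtain ⟨v, hvQ, hv⟩ := hymem (d i) (Finset.mem_union_left _
        (Finset.mem_union_right _ (Finset.mem_image_of_mem d hmi)))
      refine ⟨s, t, u, v, fun _ => ⟨?_, ?_, htP, ?_, hvQ⟩⟩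
      · rw [h3, hs, ht, hu, hv]
      · exact (hxmono.le_iff_le (Set.mem_Iic.mpr hsP) (Set.mem_Iic.mpr htP)).mp
          (by rw [hs, ht]; exact h1)
      · exact (hymono.le_iff_le (Set.mem_Iic.mpr huQ) (Set.mem_Iic.mpr hvQ)).mp
          (by rw [hu, hv]; exact h2)
    · exact ⟨0, 0, 0, 0, fun h' => absurd h' h⟩
  choose s t u v hstuv using hrepR
  -- indices for the second family
  have hrepR' : ∀ j, ∃ s t u v : ℕ, j < n →
      (R' j = Rect (x s) (x t) (y u) (y v) ∧ s ≤ t ∧ t ≤ P ∧ u ≤ v ∧ v ≤ Q) := by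
    intro j
    by_cases h : j < n
    · obtain ⟨h1, h2, h3⟩ := hab' j h
      have hmj := Finset.mem_range.mpr h
      obtain ⟨s, hsP, hs⟩ := hxmem (a' j) (Finset.mem_union_right _
        (Finset.mem_union_left _ (Finset.mem_image_of_mem a' hmj)))
      obtain ⟨t, htP, ht⟩ := hxmem (b' j) (Finset.mem_union_right _
        (Finset.mem_union_right _ (Finset.mem_image_of_mem b' hmj)))
      obtain ⟨u, huQ, hu⟩ := hymem (c' j) (Finset.mem_union_right _
        (Finset.mem_union_left _ (Finset.mem_image_of_mem c' hmj)))
      obtain ⟨v, hvQ, hv⟩ := hymem (d' j) (Finset.mem_union_right _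
        (Finset.mem_union_right _ (Finset.mem_image_of_mem d' hmj)))
      refine ⟨s, t, u, v, fun _ => ⟨?_, ?_, htP, ?_, hvQ⟩⟩
      · rw [h3, hs, ht, hu, hv]
      · exact (hxmono.le_iff_le (Set.mem_Iic.mpr hsP) (Set.mem_Iic.mpr htP)).mp
          (by rw [hs, ht]; exact h1)
      · exact (hymono.le_iff_le (Set.mem_Iic.mpr huQ) (Set.mem_Iic.mpr hvQ)).mp
          (by rw [hu, hv]; exact h2)
    · exact ⟨0, 0, 0, 0, fun h' => absurd h' h⟩
  choose s' t' u' v' hstuv' using hrepR'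
  rw [sum_eq_cellsum hcutV hcutH x y P Q hxmono hymono m R s t u v hstuv hdisj,
    sum_eq_cellsum hcutV hcutH x y P Q hxmono hymono n R' s' t' u' v' hstuv' hdisj',
    hunion]
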